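/- For every index set J and every family of functions c_j : (0,1) → M (j ∈ J), one has π⁻¹(O_J(N_upp, ι_upp)) = {(α,p) ∈ N' : p ∈ O_J(N_α, ι_α)}; equivalently, j_α⁻¹(O_J(N_upp, ι_upp)) = O_J(N_α, ι_α) for every α ∈ A. -/
import Mathlib
open Topology Filter

/-- The identification relation on the disjoint union `Σ α, N α`:
`(α,p) ∼ (β,q)` iff (`α ≤ β` and `ψ_{αβ}(p) = q`) or (`β ≤ α` and `ψ_{βα}(q) = p`). -/
def simRel {A : Type*} [LinearOrder A] {N : A → Type*}
    (ψ : ∀ α β : A, α ≤ β → N α → N β) :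
    (Σ α, N α) → (Σ α, N α) → Prop :=
  fun x y =>
    (∃ h : x.1 ≤ y.1, ψ x.1 y.1 h x.2 = y.2) ∨
    (∃ h : y.1 ≤ x.1, ψ y.1 x.1 h y.2 = x.2)

/-- The "thickening" `O_J(Z, f)` associated to a family of curves `c_j : (0,1) → M` and a map
`f : M → Z`: all points `f (c j t)` with `t ∈ (0,1)`, together with all limits of
`t ↦ f (c j t)` as `t → 1⁻`. -/
def OSet {M Z : Type*} [TopologicalSpace Z] {J : Type*} (c : J → ℝ → M) (f : M → Z) :
    Set Z :=
  {z | (∃ j : J, ∃ t ∈ Set.Ioo (0:ℝ) 1, f (c j t) = z) ∨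
       (∃ j : J, Filter.Tendsto (fun t => f (c j t)) (nhdsWithin 1 (Set.Ioo (0:ℝ) 1)) (nhds z))}


section Aux
variable {A : Type*} [LinearOrder A] {N : A → Type*}
    (ψ : ∀ α β : A, α ≤ β → N α → N β)
    (hψinj : ∀ (α β : A) (h : α ≤ β), Function.Injective (ψ α β h))
    (hψid : ∀ (α : A) (h : α ≤ α), ψ α α h = id)
    (hψcomp : ∀ (α β γ : A) (h₁ : α ≤ β) (h₂ : β ≤ γ),
      (ψ β γ h₂) ∘ (ψ α β h₁) = ψ α γ (h₁.trans h₂))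

include hψinj hψid hψcomp in
theorem simRel_equivalence : Equivalence (simRel ψ) := by
  constructor
  · intro x; exact Or.inl ⟨le_refl _, by rw [hψid]; rfl⟩
  · intro x y h; exact h.symm.imp (fun ⟨h, e⟩ => ⟨h, e⟩) (fun ⟨h, e⟩ => ⟨h, e⟩)
  · rintro x y z (⟨h1, e1⟩ | ⟨h1, e1⟩) (⟨h2, e2⟩ | ⟨h2, e2⟩)
    · exact Or.inl ⟨h1.trans h2, by
        rw [← hψcomp _ _ _ h1 h2]; simp only [Function.comp_apply, e1, e2]⟩
    · rcases le_total x.1 z.1 with h3 | h3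
      · refine Or.inl ⟨h3, hψinj _ _ h2 ?_⟩
        have := congrFun (hψcomp _ _ _ h3 h2) x.2
        simp only [Function.comp_apply] at this
        rw [this, e1, e2]
      · refine Or.inr ⟨h3, hψinj _ _ h1 ?_⟩
        have := congrFun (hψcomp _ _ _ h3 h1) z.2
        simp only [Function.comp_apply] at this
        rw [this, e1]; exact e2
    · rcases le_total x.1 z.1 with h3 | h3
      · refine Or.inl ⟨h3, ?_⟩
        rw [← e1, ← e2]
        have := congrFun (hψcomp _ _ _ h1 h3) y.2
        simp only [Function.comp_apply] at this
        rw [this]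
      · refine Or.inr ⟨h3, ?_⟩
        rw [← e1, ← e2]
        have := congrFun (hψcomp _ _ _ h2 h3) y.2
        simp only [Function.comp_apply] at this
        rw [this]
    · refine Or.inr ⟨h2.trans h1, ?_⟩
      rw [← hψcomp _ _ _ h2 h1]; simp only [Function.comp_apply, e2, e1]

include hψinj hψid hψcomp in
theorem simRel_mk_eq_mk {x y : Σ α, N α} :
    Quot.mk (simRel ψ) x = Quot.mk (simRel ψ) y ↔ simRel ψ x y := by
  rw [Quot.eq]
  exact (simRel_equivalence ψ hψinj hψid hψcomp).eqvGen_iff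

end Aux

section Top
variable {A : Type*} [LinearOrder A] {N : A → Type*} [∀ α, TopologicalSpace (N α)]
    (ψ : ∀ α β : A, α ≤ β → N α → N β)
    (hψ : ∀ (α β : A) (h : α ≤ β), IsOpenEmbedding (ψ α β h))
    (hψid : ∀ (α : A) (h : α ≤ α), ψ α α h = id)
    (hψcomp : ∀ (α β γ : A) (h₁ : α ≤ β) (h₂ : β ≤ γ),
      (ψ β γ h₂) ∘ (ψ α β h₁) = ψ α γ (h₁.trans h₂))

theorem continuous_jmap (α : A) :
    Continuous (fun p : N α => Quot.mk (simRel ψ) ⟨α, p⟩) :=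
  continuous_quot_mk.comp continuous_sigmaMk

include hψ hψid hψcomp in
theorem isOpenMap_jmap (α : A) :
    IsOpenMap (fun p : N α => Quot.mk (simRel ψ) ⟨α, p⟩) := by
  intro U hU
  have hq : IsOpen (Quot.mk (simRel ψ) ⁻¹'
      ((fun p : N α => Quot.mk (simRel ψ) ⟨α, p⟩) '' U)) := by
    rw [isOpen_sigma_iff]
    intro β
    have hmem : ∀ q : N β, (⟨β, q⟩ : Σ γ, N γ) ∈
        Quot.mk (simRel ψ) ⁻¹' ((fun p : N α => Quot.mk (simRel ψ) ⟨α, p⟩) '' U) ↔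
        ∃ u ∈ U, simRel ψ (⟨β, q⟩ : Σ γ, N γ) ⟨α, u⟩ := by
      intro q
      simp only [Set.mem_preimage, Set.mem_image]
      constructor
      · rintro ⟨u, hu, he⟩
        exact ⟨u, hu, (simRel_mk_eq_mk ψ (fun a b h => (hψ a b h).injective) hψid hψcomp).mp
          he.symm⟩
      · rintro ⟨u, hu, hr⟩
        exact ⟨u, hu, ((simRel_mk_eq_mk ψ (fun a b h => (hψ a b h).injective) hψid
          hψcomp).mpr hr).symm⟩
    rcases le_total β α with h | h
    · have : Sigma.mk β ⁻¹' (Quot.mk (simRel ψ) ⁻¹'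
          ((fun p : N α => Quot.mk (simRel ψ) ⟨α, p⟩) '' U)) = ψ β α h ⁻¹' U := by
        ext q
        rw [Set.mem_preimage, hmem q]
        constructor
        · rintro ⟨u, hu, (⟨h', e⟩ | ⟨h', e⟩)⟩
          · simpa [show h' = h from rfl] using e ▸ hu
          · dsimp only at e
            have := congrFun (hψcomp α β α h' h) u
            simp only [Function.comp_apply, hψid] at this
            rw [Set.mem_preimage, ← e, this]; exact hu
        · intro hq
          exact ⟨ψ β α h q, hq, Or.inl ⟨h, rfl⟩⟩
      rw [this]
      exact hU.preimage (hψ β α h).continuous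
    · have : Sigma.mk β ⁻¹' (Quot.mk (simRel ψ) ⁻¹'
          ((fun p : N α => Quot.mk (simRel ψ) ⟨α, p⟩) '' U)) = ψ α β h '' U := by
        ext q
        rw [Set.mem_preimage, hmem q]
        constructor
        · rintro ⟨u, hu, (⟨h', e⟩ | ⟨h', e⟩)⟩
          · dsimp only at e
            have := congrFun (hψcomp β α β h' h) q
            simp only [Function.comp_apply, hψid] at this
            exact ⟨u, hu, by rw [← e, this]; rfl⟩
          · exact ⟨u, hu, e⟩
        · rintro ⟨u, hu, he⟩
          exact ⟨u, hu, Or.inr ⟨h, he⟩⟩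
      rw [this]
      exact (hψ α β h).isOpenMap U hU
  exact hq

include hψ hψid hψcomp in
theorem isOpenEmbedding_jmap (α : A) :
    IsOpenEmbedding (fun p : N α => Quot.mk (simRel ψ) ⟨α, p⟩) := by
  refine IsOpenEmbedding.of_continuous_injective_isOpenMap (continuous_jmap ψ α) ?_
    (isOpenMap_jmap ψ hψ hψid hψcomp α)
  intro p q h
  rcases (simRel_mk_eq_mk ψ (fun a b h => (hψ a b h).injective) hψid hψcomp).mp h with
    ⟨h', e⟩ | ⟨h', e⟩
  · simpa [hψid α h'] using e
  · simpa [hψid α h'] using e.symm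

end Top

/-- `π⁻¹(O_J(N_upp, ι_upp))` consists exactly of the points `(α,p)` with
`p ∈ O_J(N_α, ι_α)`; equivalently `j_α⁻¹(O_J(N_upp, ι_upp)) = O_J(N_α, ι_α)` for all `α`. -/
theorem preimage_OSet
    {M : Type*} [TopologicalSpace M]
    {A : Type*} [LinearOrder A] [Nonempty A]
    {N : A → Type*} [∀ α, TopologicalSpace (N α)]
    (ι : ∀ α, M → N α) (hι : ∀ α, IsOpenEmbedding (ι α))
    (ψ : ∀ α β : A, α ≤ β → N α → N β)
    (hψ : ∀ (α β : A) (h : α ≤ β), IsOpenEmbedding (ψ α β h))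
    (hψι : ∀ (α β : A) (h : α ≤ β), (ψ α β h) ∘ (ι α) = ι β)
    (hψid : ∀ (α : A) (h : α ≤ α), ψ α α h = id)
    (hψcomp : ∀ (α β γ : A) (h₁ : α ≤ β) (h₂ : β ≤ γ),
      (ψ β γ h₂) ∘ (ψ α β h₁) = ψ α γ (h₁.trans h₂))
    (α₀ : A) {J : Type*} (c : J → ℝ → M) :
    ((Quot.mk (simRel ψ)) ⁻¹'
        (OSet c (fun m => Quot.mk (simRel ψ) ⟨α₀, ι α₀ m⟩)) =
      {x : Σ α, N α | x.2 ∈ OSet c (ι x.1)}) ∧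
    (∀ α : A, (fun p : N α => Quot.mk (simRel ψ) ⟨α, p⟩) ⁻¹'
        (OSet c (fun m => Quot.mk (simRel ψ) ⟨α₀, ι α₀ m⟩)) = OSet c (ι α)) := by
  have hemb := isOpenEmbedding_jmap ψ hψ hψid hψcomp
  have hindep : ∀ (α : A) (m : M),
      Quot.mk (simRel ψ) ⟨α₀, ι α₀ m⟩ = Quot.mk (simRel ψ) (⟨α, ι α m⟩ : Σ β, N β) := by
    intro α m
    rcases le_total α₀ α with h | h
    · exact Quot.sound (Or.inl ⟨h, congrFun (hψι α₀ α h) m⟩)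
    · exact Quot.sound (Or.inr ⟨h, congrFun (hψι α α₀ h) m⟩)
  have key : ∀ α : A, (fun p : N α => Quot.mk (simRel ψ) ⟨α, p⟩) ⁻¹'
      (OSet c (fun m => Quot.mk (simRel ψ) ⟨α₀, ι α₀ m⟩)) = OSet c (ι α) := by
    intro α
    ext p
    simp only [Set.mem_preimage, OSet, Set.mem_setOf_eq]
    constructor
    · rintro (⟨j, t, ht, he⟩ | ⟨j, htend⟩)
      · left
        refine ⟨j, t, ht, ?_⟩
        rw [hindep α (c j t)] at he
        rcases (simRel_mk_eq_mk ψ (fun a b h => (hψ a b h).injective) hψid hψcomp).mp he with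
          ⟨h', e⟩ | ⟨h', e⟩
        · simpa [hψid α h'] using e
        · simpa [hψid α h'] using e.symm
      · right
        refine ⟨j, ?_⟩
        rw [(hemb α).isInducing.tendsto_nhds_iff]
        simpa only [Function.comp_def, ← hindep α] using htend
    · rintro (⟨j, t, ht, he⟩ | ⟨j, htend⟩)
      · exact Or.inl ⟨j, t, ht, by rw [hindep α (c j t), he]⟩
      · right
        refine ⟨j, ?_⟩
        have := ((continuous_jmap ψ α).tendsto p).comp htend
        simpa only [Function.comp_def, ← hindep α] using this
  refine ⟨?_, key⟩
  ext ⟨β, q⟩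
  simp only [Set.mem_preimage, Set.mem_setOf_eq]
  exact Set.ext_iff.mp (key β) q
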